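/- Let k be a field, let R and S be polynomial rings over k in at least one variable each, with graded maximal ideals m and n, and let T = R ⊗_k S with graded maximal ideal p = mT + nT. Let K_0 ⊇ K_1 ⊇ ⋯ and L_0 ⊇ L_1 ⊇ ⋯ be descending chains of homogeneous ideals of R and S respectively, and for s ≥ 1 set W_s = (Σ_{i=0}^{s} K_i n^{s-i}) ∩ (Σ_{t=0}^{s} L_t m^{s-t}). Assume m ⊆ K_0, n ⊆ L_0, dim(R/K_1) > 0 and dim(S/L_1) > 0. Then for every s ≥ 1 one has m^s n^s ⊄ p·W_s; in particular W_s has a minimal homogeneous generator of degree 2s. -/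

import Mathlib

/- STATEMENT 15: k a field, R and S polynomial rings over k in at least one variable each
with graded maximal ideals m and n, T = R ⊗_k S with graded maximal ideal p = mT + nT.
Let K_0 ⊇ K_1 ⊇ ⋯ and L_0 ⊇ L_1 ⊇ ⋯ be descending chains of homogeneous ideals of R and S,
and for s ≥ 1 set W_s = (Σ_{i=0}^{s} K_i n^{s-i}) ∩ (Σ_{t=0}^{s} L_t m^{s-t}).
Assume m ⊆ K_0, n ⊆ L_0, dim(R/K_1) > 0 and dim(S/L_1) > 0. Then for every s ≥ 1:
m^s n^s ⊄ p·W_s; in particular W_s has a minimal homogeneous generator of degree 2s. -/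

open MvPolynomial

noncomputable section

/-- The graded maximal ideal of a polynomial ring, generated by the variables. -/
def mxI (k : Type*) [Field k] (σ : Type*) : Ideal (MvPolynomial σ k) :=
  Ideal.span (Set.range MvPolynomial.X)

/-- An ideal of a polynomial ring is homogeneous if it contains every homogeneous
component of each of its elements. -/
def IsHomogIdeal {k : Type*} [Field k] {σ : Type*} (I : Ideal (MvPolynomial σ k)) : Prop :=
  ∀ f ∈ I, ∀ d : ℕ, MvPolynomial.homogeneousComponent d f ∈ I

namespace Stmt15

variable {k : Type*} [Field k] {a b : ℕ}

theorem exists_dual_functional {M : Type*} [AddCommGroup M] [Module k M]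
    (p : Submodule k M) {v : M} (hv : v ∉ p) :
    ∃ φ : M →ₗ[k] k, (∀ x ∈ p, φ x = 0) ∧ φ v = 1 := by
  obtain ⟨g, hg⟩ := (LinearPMap.supSpanSingleton ⟨p, 0⟩ v (1 : k) hv).toFun.exists_extend
  refine ⟨g, ?_, ?_⟩
  · intro x hx
    have h := LinearPMap.supSpanSingleton_apply_mk (⟨p, 0⟩ : M →ₗ.[k] k) v (1 : k) hv x hx 0
    have h2 := (LinearMap.congr_fun hg _).trans h
    change g (x + (0 : k) • v) = _ at h2
    simpa using h2
  · have h := LinearPMap.supSpanSingleton_apply_mk (⟨p, 0⟩ : M →ₗ.[k] k) v (1 : k) hv 0 p.zero_mem 1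
    have h2 := (LinearMap.congr_fun hg _).trans h
    change g (0 + (1 : k) • v) = _ at h2
    simpa using h2




def exl (e : (Fin a ⊕ Fin b) →₀ ℕ) : Fin a →₀ ℕ :=
  e.comapDomain Sum.inl Sum.inl_injective.injOn

def exr (e : (Fin a ⊕ Fin b) →₀ ℕ) : Fin b →₀ ℕ :=
  e.comapDomain Sum.inr Sum.inr_injective.injOn

@[simp] lemma exl_apply (e : (Fin a ⊕ Fin b) →₀ ℕ) (i : Fin a) : exl e i = e (Sum.inl i) := rfl
@[simp] lemma exr_apply (e : (Fin a ⊕ Fin b) →₀ ℕ) (i : Fin b) : exr e i = e (Sum.inr i) := rfl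

@[simp] lemma exl_add (e e' : (Fin a ⊕ Fin b) →₀ ℕ) : exl (e + e') = exl e + exl e' := by
  ext i; simp

@[simp] lemma exr_add (e e' : (Fin a ⊕ Fin b) →₀ ℕ) : exr (e + e') = exr e + exr e' := by
  ext i; simp

@[simp] lemma exl_mapDomain_inl (u : Fin a →₀ ℕ) :
    exl (Finsupp.mapDomain (Sum.inl : Fin a → Fin a ⊕ Fin b) u) = u := by
  ext i; simp [Finsupp.mapDomain_apply Sum.inl_injective]

@[simp] lemma exr_mapDomain_inr (u : Fin b →₀ ℕ) :
    exr (Finsupp.mapDomain (Sum.inr : Fin b → Fin a ⊕ Fin b) u) = u := by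
  ext i; simp [Finsupp.mapDomain_apply Sum.inr_injective]

@[simp] lemma exl_mapDomain_inr (u : Fin b →₀ ℕ) :
    exl (Finsupp.mapDomain (Sum.inr : Fin b → Fin a ⊕ Fin b) u) = 0 := by
  ext i
  simp only [exl_apply, Finsupp.coe_zero, Pi.zero_apply]
  exact Finsupp.mapDomain_notin_range _ _ (by simp)

@[simp] lemma exr_mapDomain_inl (u : Fin a →₀ ℕ) :
    exr (Finsupp.mapDomain (Sum.inl : Fin a → Fin a ⊕ Fin b) u) = 0 := by
  ext i
  simp only [exr_apply, Finsupp.coe_zero, Pi.zero_apply]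
  exact Finsupp.mapDomain_notin_range _ _ (by simp)

lemma degree_add {σ : Type*} (u v : σ →₀ ℕ) :
    Finsupp.degree (u + v) = Finsupp.degree u + Finsupp.degree v := by
  simp [Finsupp.degree_eq_weight_one, map_add]

lemma degree_single {σ : Type*} (i : σ) (n : ℕ) :
    Finsupp.degree (Finsupp.single i n) = n := by
  classical
  rcases eq_or_ne n 0 with rfl | h
  · simp
  · exact Finsupp.degree_single _ _

/-- The key linear functional on `T`. -/
def Phi (φ : MvPolynomial (Fin a) k →ₗ[k] k) (ψ : MvPolynomial (Fin b) k →ₗ[k] k) :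
    MvPolynomial (Fin a ⊕ Fin b) k →ₗ[k] k :=
  (basisMonomials (Fin a ⊕ Fin b) k).constr k
    (fun e => φ (monomial (exl e) 1) * ψ (monomial (exr e) 1))

variable (φ : MvPolynomial (Fin a) k →ₗ[k] k) (ψ : MvPolynomial (Fin b) k →ₗ[k] k)

lemma Phi_monomial (e : (Fin a ⊕ Fin b) →₀ ℕ) (c : k) :
    Phi φ ψ (monomial e c) = c * (φ (monomial (exl e) 1) * ψ (monomial (exr e) 1)) := by
  have h : (monomial e c : MvPolynomial (Fin a ⊕ Fin b) k)
      = c • (basisMonomials (Fin a ⊕ Fin b) k e) := by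
    simp [coe_basisMonomials, smul_monomial]
  rw [Phi, h, map_smul, Module.Basis.constr_basis, smul_eq_mul]

lemma Phi_monomial_mul_inr (e : (Fin a ⊕ Fin b) →₀ ℕ) (c : k) (lam : MvPolynomial (Fin b) k) :
    Phi φ ψ (monomial e c * rename Sum.inr lam)
      = c * (φ (monomial (exl e) 1) * ψ (monomial (exr e) 1 * lam)) := by
  induction lam using MvPolynomial.induction_on' with
  | monomial u d =>
      rw [rename_monomial, monomial_mul, Phi_monomial]
      have h1 : (monomial (exr e) (1:k)) * monomial u d = monomial (exr e + u) d := by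
        rw [monomial_mul, one_mul]
      have h2 : (monomial (exr e + u) d : MvPolynomial (Fin b) k)
          = d • monomial (exr e + u) 1 := by simp [smul_monomial]
      rw [h1, h2, map_smul, smul_eq_mul]
      simp only [exl_add, exl_mapDomain_inr, add_zero, exr_add, exr_mapDomain_inr]
      ring
  | add p q hp hq =>
      simp only [mul_add, map_add, hp, hq]
      try ring

lemma Phi_monomial_mul_inl (e : (Fin a ⊕ Fin b) →₀ ℕ) (c : k) (lam : MvPolynomial (Fin a) k) :
    Phi φ ψ (monomial e c * rename Sum.inl lam)
      = c * (φ (monomial (exl e) 1 * lam) * ψ (monomial (exr e) 1)) := by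
  induction lam using MvPolynomial.induction_on' with
  | monomial u d =>
      rw [rename_monomial, monomial_mul, Phi_monomial]
      have h1 : (monomial (exl e) (1:k)) * monomial u d = monomial (exl e + u) d := by
        rw [monomial_mul, one_mul]
      have h2 : (monomial (exl e + u) d : MvPolynomial (Fin a) k)
          = d • monomial (exl e + u) 1 := by simp [smul_monomial]
      rw [h1, h2, map_smul, smul_eq_mul]
      simp only [exl_add, exl_mapDomain_inl, exr_add, exr_mapDomain_inl, add_zero]
      ring
  | add p q hp hq =>
      simp only [mul_add, map_add, hp, hq]
      try ring

lemma Phi_zero_of_mem_map_inr (I : Ideal (MvPolynomial (Fin b) k)) (hψ : ∀ x ∈ I, ψ x = 0)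
    {u : MvPolynomial (Fin a ⊕ Fin b) k}
    (hu : u ∈ Ideal.map (rename (Sum.inr : Fin b → Fin a ⊕ Fin b) :
      MvPolynomial (Fin b) k →ₐ[k] MvPolynomial (Fin a ⊕ Fin b) k) I)
    (g : MvPolynomial (Fin a ⊕ Fin b) k) :
    Phi φ ψ (g * u) = 0 := by
  rw [Ideal.map] at hu
  induction hu using Submodule.span_induction generalizing g with
  | mem x hx =>
      obtain ⟨lam, hlam, rfl⟩ := hx
      induction g using MvPolynomial.induction_on' with
      | monomial e c =>
          rw [show ((rename (Sum.inr : Fin b → Fin a ⊕ Fin b) :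
              MvPolynomial (Fin b) k →ₐ[k] MvPolynomial (Fin a ⊕ Fin b) k) lam)
            = rename Sum.inr lam from rfl, Phi_monomial_mul_inr,
            hψ _ (Ideal.mul_mem_left _ _ hlam), mul_zero, mul_zero]
      | add p q hp hq => rw [add_mul, map_add, hp, hq, add_zero]
  | zero => simp
  | add x y hx hy ihx ihy => rw [mul_add, map_add, ihx, ihy, add_zero]
  | smul t x hx ih =>
      rw [smul_eq_mul, show g * (t * x) = (g * t) * x by ring, ih]

lemma Phi_zero_of_mem_map_inl (I : Ideal (MvPolynomial (Fin a) k)) (hφ : ∀ x ∈ I, φ x = 0)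
    {u : MvPolynomial (Fin a ⊕ Fin b) k}
    (hu : u ∈ Ideal.map (rename (Sum.inl : Fin a → Fin a ⊕ Fin b) :
      MvPolynomial (Fin a) k →ₐ[k] MvPolynomial (Fin a ⊕ Fin b) k) I)
    (g : MvPolynomial (Fin a ⊕ Fin b) k) :
    Phi φ ψ (g * u) = 0 := by
  rw [Ideal.map] at hu
  induction hu using Submodule.span_induction generalizing g with
  | mem x hx =>
      obtain ⟨lam, hlam, rfl⟩ := hx
      induction g using MvPolynomial.induction_on' with
      | monomial e c =>
          rw [show ((rename (Sum.inl : Fin a → Fin a ⊕ Fin b) :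
              MvPolynomial (Fin a) k →ₐ[k] MvPolynomial (Fin a ⊕ Fin b) k) lam)
            = rename Sum.inl lam from rfl, Phi_monomial_mul_inl,
            hφ _ (Ideal.mul_mem_left _ _ hlam), zero_mul, mul_zero]
      | add p q hp hq => rw [add_mul, map_add, hp, hq, add_zero]
  | zero => simp
  | add x y hx hy ihx ihy => rw [mul_add, map_add, ihx, ihy, add_zero]
  | smul t x hx ih =>
      rw [smul_eq_mul, show g * (t * x) = (g * t) * x by ring, ih]

lemma Phi_zero_of_degr (s : ℕ)
    (hψs : ∀ u : Fin b →₀ ℕ, Finsupp.degree u ≠ s → ψ (monomial u 1) = 0)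
    {f : MvPolynomial (Fin a ⊕ Fin b) k}
    (hf : ∀ e ∈ f.support, Finsupp.degree (exr e) ≠ s) : Phi φ ψ f = 0 := by
  conv_lhs => rw [f.as_sum]
  rw [map_sum]
  refine Finset.sum_eq_zero fun e he => ?_
  rw [Phi_monomial, hψs _ (hf e he), mul_zero, mul_zero]

lemma Phi_zero_of_degl (s : ℕ)
    (hφs : ∀ u : Fin a →₀ ℕ, Finsupp.degree u ≠ s → φ (monomial u 1) = 0)
    {f : MvPolynomial (Fin a ⊕ Fin b) k}
    (hf : ∀ e ∈ f.support, Finsupp.degree (exl e) ≠ s) : Phi φ ψ f = 0 := by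
  conv_lhs => rw [f.as_sum]
  rw [map_sum]
  refine Finset.sum_eq_zero fun e he => ?_
  rw [Phi_monomial, hφs _ (hf e he), zero_mul, mul_zero]

/- ### support degree bounds for powers of the variable ideals -/

lemma one_le_degr {u : MvPolynomial (Fin a ⊕ Fin b) k}
    (hu : u ∈ Ideal.span (X '' Set.range (Sum.inr : Fin b → Fin a ⊕ Fin b) :
      Set (MvPolynomial (Fin a ⊕ Fin b) k))) :
    ∀ e ∈ u.support, 1 ≤ Finsupp.degree (exr e) := by
  intro e he
  obtain ⟨i, ⟨i', rfl⟩, hne⟩ := mem_ideal_span_X_image.1 hu e he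
  calc 1 ≤ exr e i' := Nat.one_le_iff_ne_zero.2 (by simpa using hne)
  _ ≤ Finsupp.degree (exr e) := Finsupp.le_degree _ _

lemma one_le_degl {u : MvPolynomial (Fin a ⊕ Fin b) k}
    (hu : u ∈ Ideal.span (X '' Set.range (Sum.inl : Fin a → Fin a ⊕ Fin b) :
      Set (MvPolynomial (Fin a ⊕ Fin b) k))) :
    ∀ e ∈ u.support, 1 ≤ Finsupp.degree (exl e) := by
  intro e he
  obtain ⟨i, ⟨i', rfl⟩, hne⟩ := mem_ideal_span_X_image.1 hu e he
  calc 1 ≤ exl e i' := Nat.one_le_iff_ne_zero.2 (by simpa using hne)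
  _ ≤ Finsupp.degree (exl e) := Finsupp.le_degree _ _

lemma pow_le_degr (r : ℕ) {u : MvPolynomial (Fin a ⊕ Fin b) k}
    (hu : u ∈ (Ideal.span (X '' Set.range (Sum.inr : Fin b → Fin a ⊕ Fin b) :
      Set (MvPolynomial (Fin a ⊕ Fin b) k))) ^ r) :
    ∀ e ∈ u.support, r ≤ Finsupp.degree (exr e) := by
  classical
  induction r generalizing u with
  | zero => intro e he; exact Nat.zero_le _
  | succ r ih =>
      rw [pow_succ] at hu
      refine Submodule.mul_induction_on hu ?_ ?_
      · intro m hm n hn e he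
        obtain ⟨e1, he1, e2, he2, rfl⟩ := Finset.mem_add.1 (support_mul m n he)
        have h1 := ih hm e1 he1
        have h2 := one_le_degr hn e2 he2
        rw [exr_add, degree_add]
        omega
      · intro x y hx hy e he
        rcases Finset.mem_union.1 (MvPolynomial.support_add he) with h | h
        · exact hx e h
        · exact hy e h

lemma pow_le_degl (r : ℕ) {u : MvPolynomial (Fin a ⊕ Fin b) k}
    (hu : u ∈ (Ideal.span (X '' Set.range (Sum.inl : Fin a → Fin a ⊕ Fin b) :
      Set (MvPolynomial (Fin a ⊕ Fin b) k))) ^ r) :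
    ∀ e ∈ u.support, r ≤ Finsupp.degree (exl e) := by
  classical
  induction r generalizing u with
  | zero => intro e he; exact Nat.zero_le _
  | succ r ih =>
      rw [pow_succ] at hu
      refine Submodule.mul_induction_on hu ?_ ?_
      · intro m hm n hn e he
        obtain ⟨e1, he1, e2, he2, rfl⟩ := Finset.mem_add.1 (support_mul m n he)
        have h1 := ih hm e1 he1
        have h2 := one_le_degl hn e2 he2
        rw [exl_add, degree_add]
        omega
      · intro x y hx hy e he
        rcases Finset.mem_union.1 (MvPolynomial.support_add he) with h | h
        · exact hx e h
        · exact hy e h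

/- ### the dual-functional target subspace -/

lemma X_pow_not_mem_sup {σ : Type*} (I : Ideal (MvPolynomial σ k))
    (hI : ∀ f ∈ I, ∀ d : ℕ, homogeneousComponent d f ∈ I)
    (s : ℕ) (j : σ) (hj : X j ^ s ∉ I) :
    X j ^ s ∉ (I.restrictScalars k ⊔ Submodule.span k
      {g : MvPolynomial σ k | ∃ u : σ →₀ ℕ, Finsupp.degree u ≠ s ∧ g = monomial u 1}) := by
  intro h
  obtain ⟨x, hx, y, hy, hxy⟩ := Submodule.mem_sup.1 h
  have hcy : homogeneousComponent s y = 0 := by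
    refine Submodule.span_induction ?_ ?_ ?_ ?_ hy
    · rintro g ⟨u, hu, rfl⟩
      have hmem : (monomial u (1:k)) ∈ homogeneousSubmodule σ k (Finsupp.degree u) :=
        (mem_homogeneousSubmodule _ _).2 (isHomogeneous_monomial _ rfl)
      rw [homogeneousComponent_of_mem hmem, if_neg (Ne.symm hu)]
    · exact map_zero _
    · intro p q _ _ hp hq; rw [map_add, hp, hq, add_zero]
    · intro c p _ hp; rw [map_smul, hp, smul_zero]
  have hvx : homogeneousComponent s (X j ^ s : MvPolynomial σ k) = X j ^ s := by
    have hhom : (X j ^ s : MvPolynomial σ k) ∈ homogeneousSubmodule σ k s :=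
      (mem_homogeneousSubmodule _ _).2 (by simpa using (isHomogeneous_X k j).pow s)
    rw [homogeneousComponent_of_mem hhom, if_pos rfl]
  apply hj
  have : homogeneousComponent s (x + y) = X j ^ s := by rw [hxy, hvx]
  rw [map_add, hcy, add_zero] at this
  rw [← this]
  exact hI x hx s

lemma exists_X_pow_not_mem {n : ℕ} (I : Ideal (MvPolynomial (Fin n) k))
    {s : ℕ} (hs : 1 ≤ s) (hdim : 0 < ringKrullDim (MvPolynomial (Fin n) k ⧸ I)) :
    ∃ j : Fin n, X j ^ s ∉ I := by
  by_contra hcon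
  push_neg at hcon
  have hprime : ∀ P : Ideal (MvPolynomial (Fin n) k), P.IsPrime → I ≤ P →
      P = Ideal.span (Set.range X) := by
    intro P hP hIP
    have hspanle : Ideal.span (Set.range (X : Fin n → MvPolynomial (Fin n) k)) ≤ P := by
      rw [Ideal.span_le]
      rintro _ ⟨j, rfl⟩
      exact (hP.pow_mem_iff_mem s hs).1 (hIP (hcon j))
    refine le_antisymm ?_ hspanle
    intro f hf
    have key : ∀ g : MvPolynomial (Fin n) k, constantCoeff g = 0 →
        g ∈ Ideal.span (Set.range (X : Fin n → MvPolynomial (Fin n) k)) := by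
      intro g hg
      rw [← Set.image_univ, mem_ideal_span_X_image]
      intro m hm
      have hm0 : m ≠ 0 := by
        rintro rfl
        rw [mem_support_iff] at hm
        exact hm (by rw [constantCoeff_eq] at hg; exact hg)
      obtain ⟨i, hi⟩ := Finsupp.ne_iff.1 hm0
      exact ⟨i, Set.mem_univ i, by simpa using hi⟩
    have h1 : f - C (constantCoeff f) ∈
        Ideal.span (Set.range (X : Fin n → MvPolynomial (Fin n) k)) :=
      key _ (by simp)
    by_cases h0 : constantCoeff f = 0
    · simpa [h0] using h1
    · exfalso
      have h2 : C (constantCoeff f) ∈ P := by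
        have h3 := P.sub_mem hf (hspanle h1)
        simpa using h3
      exact hP.ne_top (P.eq_top_of_isUnit_mem h2 ((isUnit_iff_ne_zero.2 h0).map C))
  have hsub : Subsingleton (PrimeSpectrum (MvPolynomial (Fin n) k ⧸ I)) := by
    constructor
    intro P Q
    have hIle : ∀ (P : Ideal (MvPolynomial (Fin n) k ⧸ I)),
        I ≤ P.comap (Ideal.Quotient.mk I) := by
      intro P x hx
      have hx0 : Ideal.Quotient.mk I x = 0 := Ideal.Quotient.eq_zero_iff_mem.2 hx
      rw [Ideal.mem_comap, hx0]
      exact P.zero_mem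
    have hPQ : P.asIdeal.comap (Ideal.Quotient.mk I) = Q.asIdeal.comap (Ideal.Quotient.mk I) := by
      rw [hprime _ (P.isPrime.comap _) (hIle _), hprime _ (Q.isPrime.comap _) (hIle _)]
    exact PrimeSpectrum.ext
      (Ideal.comap_injective_of_surjective (Ideal.Quotient.mk I)
        Ideal.Quotient.mk_surjective hPQ)
  have hle : ringKrullDim (MvPolynomial (Fin n) k ⧸ I) ≤ 0 :=
    Order.krullDim_nonpos_of_subsingleton
  exact absurd (lt_of_lt_of_le hdim hle) (lt_irrefl _)

end Stmt15

set_option maxHeartbeats 1000000 in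
theorem filtration_intersection_has_generator_of_degree_two_s
    (k : Type*) [Field k] (a b : ℕ) (ha : 0 < a) (hb : 0 < b)
    (K : ℕ → Ideal (MvPolynomial (Fin a) k)) (hKdesc : ∀ i : ℕ, K (i + 1) ≤ K i)
    (hKhom : ∀ i : ℕ, IsHomogIdeal (K i))
    (L : ℕ → Ideal (MvPolynomial (Fin b) k)) (hLdesc : ∀ t : ℕ, L (t + 1) ≤ L t)
    (hLhom : ∀ t : ℕ, IsHomogIdeal (L t))
    (hK0 : mxI k (Fin a) ≤ K 0) (hL0 : mxI k (Fin b) ≤ L 0)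
    (hK1 : 0 < ringKrullDim (MvPolynomial (Fin a) k ⧸ K 1))
    (hL1 : 0 < ringKrullDim (MvPolynomial (Fin b) k ⧸ L 1))
    (m' n' : Ideal (MvPolynomial (Fin a ⊕ Fin b) k))
    (hm' : m' = Ideal.map (rename (Sum.inl : Fin a → Fin a ⊕ Fin b) :
      MvPolynomial (Fin a) k →ₐ[k] MvPolynomial (Fin a ⊕ Fin b) k) (mxI k (Fin a)))
    (hn' : n' = Ideal.map (rename (Sum.inr : Fin b → Fin a ⊕ Fin b) :
      MvPolynomial (Fin b) k →ₐ[k] MvPolynomial (Fin a ⊕ Fin b) k) (mxI k (Fin b)))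
    -- the extensions of the filtrations to `T`
    (K' : ℕ → Ideal (MvPolynomial (Fin a ⊕ Fin b) k))
    (hK' : ∀ i : ℕ, K' i = Ideal.map (rename (Sum.inl : Fin a → Fin a ⊕ Fin b) :
      MvPolynomial (Fin a) k →ₐ[k] MvPolynomial (Fin a ⊕ Fin b) k) (K i))
    (L' : ℕ → Ideal (MvPolynomial (Fin a ⊕ Fin b) k))
    (hL' : ∀ t : ℕ, L' t = Ideal.map (rename (Sum.inr : Fin b → Fin a ⊕ Fin b) :
      MvPolynomial (Fin b) k →ₐ[k] MvPolynomial (Fin a ⊕ Fin b) k) (L t))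
    (s : ℕ) (hs : 1 ≤ s)
    (W : Ideal (MvPolynomial (Fin a ⊕ Fin b) k))
    (hW : W = (⨆ i ∈ Finset.range (s + 1), K' i * n' ^ (s - i)) ⊓
        (⨆ t ∈ Finset.range (s + 1), L' t * m' ^ (s - t))) :
    ¬ (m' ^ s * n' ^ s ≤ (m' + n') * W) ∧
      ∃ f ∈ W, MvPolynomial.IsHomogeneous f (2 * s) ∧ f ∉ (m' + n') * W := by
  classical
  -- the descending chains
  have hKchain : ∀ i, 1 ≤ i → K i ≤ K 1 := by
    intro i hi
    induction i with
    | zero => omega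
    | succ i ih =>
        rcases Nat.eq_zero_or_pos i with rfl | hpos
        · exact le_rfl
        · exact (hKdesc i).trans (ih hpos)
  have hLchain : ∀ t, 1 ≤ t → L t ≤ L 1 := by
    intro t ht
    induction t with
    | zero => omega
    | succ t ih =>
        rcases Nat.eq_zero_or_pos t with rfl | hpos
        · exact le_rfl
        · exact (hLdesc t).trans (ih hpos)
  -- pick suitable variables and dual functionals
  obtain ⟨j, hj⟩ := Stmt15.exists_X_pow_not_mem (K 1) hs hK1
  obtain ⟨l, hl⟩ := Stmt15.exists_X_pow_not_mem (L 1) hs hL1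
  obtain ⟨φ, hφ0, hφ1⟩ :=
    Stmt15.exists_dual_functional _ (Stmt15.X_pow_not_mem_sup (K 1) (hKhom 1) s j hj)
  obtain ⟨ψ, hψ0, hψ1⟩ :=
    Stmt15.exists_dual_functional _ (Stmt15.X_pow_not_mem_sup (L 1) (hLhom 1) s l hl)
  have hφK : ∀ x ∈ K 1, φ x = 0 := fun x hx => hφ0 x (Submodule.mem_sup_left hx)
  have hφmon : ∀ u : Fin a →₀ ℕ, Finsupp.degree u ≠ s → φ (monomial u 1) = 0 := fun u hu =>
    hφ0 _ (Submodule.mem_sup_right (Submodule.subset_span ⟨u, hu, rfl⟩))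
  have hψL : ∀ x ∈ L 1, ψ x = 0 := fun x hx => hψ0 x (Submodule.mem_sup_left hx)
  have hψmon : ∀ u : Fin b →₀ ℕ, Finsupp.degree u ≠ s → ψ (monomial u 1) = 0 := fun u hu =>
    hψ0 _ (Submodule.mem_sup_right (Submodule.subset_span ⟨u, hu, rfl⟩))
  -- span descriptions of m', n'
  have hmspan : m' = Ideal.span (X '' Set.range (Sum.inl : Fin a → Fin a ⊕ Fin b)) := by
    rw [hm', mxI, Ideal.map_span]
    rw [← Set.range_comp, ← Set.range_comp]
    have hfe : (⇑(rename (Sum.inl : Fin a → Fin a ⊕ Fin b) :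
        MvPolynomial (Fin a) k →ₐ[k] MvPolynomial (Fin a ⊕ Fin b) k) ∘ X : Fin a → _)
        = X ∘ Sum.inl := by funext i; simp
    rw [hfe]
  have hnspan : n' = Ideal.span (X '' Set.range (Sum.inr : Fin b → Fin a ⊕ Fin b)) := by
    rw [hn', mxI, Ideal.map_span]
    rw [← Set.range_comp, ← Set.range_comp]
    have hfe : (⇑(rename (Sum.inr : Fin b → Fin a ⊕ Fin b) :
        MvPolynomial (Fin b) k →ₐ[k] MvPolynomial (Fin a ⊕ Fin b) k) ∘ X : Fin b → _)
        = X ∘ Sum.inr := by funext i; simp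
    rw [hfe]
  -- the core vanishing statement
  have hcore : ∀ (e : (Fin a ⊕ Fin b) →₀ ℕ), e ≠ 0 → ∀ w ∈ W,
      Stmt15.Phi φ ψ (monomial e 1 * w) = 0 := by
    intro e he0 w hw
    rw [hW, Submodule.mem_inf] at hw
    by_cases hd : Finsupp.degree (Stmt15.exr e) = 0
    · -- the x-degree of e is positive; use the second factor
      have hc : 1 ≤ Finsupp.degree (Stmt15.exl e) := by
        obtain ⟨i, hi⟩ := Finsupp.ne_iff.1 he0
        match i with
        | Sum.inl i' =>
            exact le_trans (Nat.one_le_iff_ne_zero.2 (by simpa using hi))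
              (Finsupp.le_degree i' _)
        | Sum.inr i' =>
            exact absurd (Nat.le_zero.1 (hd ▸ Finsupp.le_degree i' (Stmt15.exr e)))
              (by simpa using hi)
      have hw2 := hw.2
      refine Submodule.iSup_induction
        (motive := fun w => Stmt15.Phi φ ψ (monomial e 1 * w) = 0) _ hw2 ?_ (by simp) ?_
      · intro t x hx
        by_cases ht : t ∈ Finset.range (s + 1)
        · rw [iSup_pos ht] at hx
          rcases Nat.eq_zero_or_pos t with rfl | htpos
          · have hx' : x ∈ m' ^ (s - 0) := Ideal.mul_le_right hx
            rw [Nat.sub_zero, hmspan] at hx'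
            refine Stmt15.Phi_zero_of_degl φ ψ s hφmon ?_
            intro e' he'
            obtain ⟨e1, he1, e2, he2, rfl⟩ := Finset.mem_add.1 (support_mul _ _ he')
            have he1e : e1 = e := Finset.mem_singleton.1 (support_monomial_subset he1)
            have hge := Stmt15.pow_le_degl s hx' e2 he2
            rw [he1e, Stmt15.exl_add, Stmt15.degree_add]
            omega
          · have hx1 : x ∈ Ideal.map (rename (Sum.inr : Fin b → Fin a ⊕ Fin b) :
                MvPolynomial (Fin b) k →ₐ[k] MvPolynomial (Fin a ⊕ Fin b) k) (L 1) := by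
              have hle1 : L' t ≤ Ideal.map (rename (Sum.inr : Fin b → Fin a ⊕ Fin b) :
                  MvPolynomial (Fin b) k →ₐ[k] MvPolynomial (Fin a ⊕ Fin b) k) (L 1) := by
                rw [hL' t]
                exact Ideal.map_mono (hLchain t htpos)
              exact hle1 (Ideal.mul_le_left hx)
            exact Stmt15.Phi_zero_of_mem_map_inr φ ψ (L 1) hψL hx1 _
        · rw [iSup_neg ht] at hx
          obtain rfl := Submodule.mem_bot _ |>.1 hx
          simp
      · intro x y hx hy
        rw [mul_add, map_add, hx, hy, add_zero]
    · -- the y-degree of e is positive; use the first factor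
      have hc : 1 ≤ Finsupp.degree (Stmt15.exr e) := Nat.one_le_iff_ne_zero.2 hd
      have hw1 := hw.1
      refine Submodule.iSup_induction
        (motive := fun w => Stmt15.Phi φ ψ (monomial e 1 * w) = 0) _ hw1 ?_ (by simp) ?_
      · intro i x hx
        by_cases hi : i ∈ Finset.range (s + 1)
        · rw [iSup_pos hi] at hx
          rcases Nat.eq_zero_or_pos i with rfl | hipos
          · have hx' : x ∈ n' ^ (s - 0) := Ideal.mul_le_right hx
            rw [Nat.sub_zero, hnspan] at hx'
            refine Stmt15.Phi_zero_of_degr φ ψ s hψmon ?_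
            intro e' he'
            obtain ⟨e1, he1, e2, he2, rfl⟩ := Finset.mem_add.1 (support_mul _ _ he')
            have he1e : e1 = e := Finset.mem_singleton.1 (support_monomial_subset he1)
            have hge := Stmt15.pow_le_degr s hx' e2 he2
            rw [he1e, Stmt15.exr_add, Stmt15.degree_add]
            omega
          · have hx1 : x ∈ Ideal.map (rename (Sum.inl : Fin a → Fin a ⊕ Fin b) :
                MvPolynomial (Fin a) k →ₐ[k] MvPolynomial (Fin a ⊕ Fin b) k) (K 1) := by
              have hle1 : K' i ≤ Ideal.map (rename (Sum.inl : Fin a → Fin a ⊕ Fin b) :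
                  MvPolynomial (Fin a) k →ₐ[k] MvPolynomial (Fin a ⊕ Fin b) k) (K 1) := by
                rw [hK' i]
                exact Ideal.map_mono (hKchain i hipos)
              exact hle1 (Ideal.mul_le_left hx)
            exact Stmt15.Phi_zero_of_mem_map_inl φ ψ (K 1) hφK hx1 _
        · rw [iSup_neg hi] at hx
          obtain rfl := Submodule.mem_bot _ |>.1 hx
          simp
      · intro x y hx hy
        rw [mul_add, map_add, hx, hy, add_zero]
  -- Phi vanishes on (m' + n') * W
  have hker : ∀ z ∈ (m' + n') * W, Stmt15.Phi φ ψ z = 0 := by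
    intro z hz
    refine Submodule.mul_induction_on hz ?_ ?_
    · intro f hf w hw
      have hf' : f ∈ Ideal.span (X '' (Set.univ : Set (Fin a ⊕ Fin b))) := by
        have hsum : m' + n' = Ideal.span (X '' (Set.univ : Set (Fin a ⊕ Fin b))) := by
          rw [hmspan, hnspan, Submodule.add_eq_sup, ← Ideal.span_union, ← Set.image_union,
            Set.range_inl_union_range_inr]
        rw [← hsum]
        exact hf
      have hfsupp : ∀ e ∈ f.support, e ≠ 0 := by
        intro e he h0
        obtain ⟨i, -, hi⟩ := mem_ideal_span_X_image.1 hf' e he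
        rw [h0] at hi
        simp at hi
      have hexp : f * w = ∑ e ∈ f.support, monomial e (coeff e f) * w := by
        rw [← Finset.sum_mul, ← f.as_sum]
      rw [hexp, map_sum]
      refine Finset.sum_eq_zero fun e he => ?_
      have hmc : monomial e (coeff e f) * w = (coeff e f) • (monomial e 1 * w) := by
        rw [← smul_mul_assoc]
        congr 1
        rw [smul_monomial, smul_eq_mul, mul_one]
      rw [hmc, map_smul, smul_eq_mul, hcore e (hfsupp e he) w hw, mul_zero]
    · intro x y hx hy
      rw [map_add, hx, hy, add_zero]
  -- the witness monomial
  set μ : MvPolynomial (Fin a ⊕ Fin b) k := X (Sum.inl j) ^ s * X (Sum.inr l) ^ s with hμdef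
  have hμmon : μ = monomial
      (Finsupp.mapDomain (Sum.inl : Fin a → Fin a ⊕ Fin b) (Finsupp.single j s)
        + Finsupp.mapDomain (Sum.inr : Fin b → Fin a ⊕ Fin b) (Finsupp.single l s)) 1 := by
    rw [hμdef, X_pow_eq_monomial, X_pow_eq_monomial, monomial_mul, one_mul,
      Finsupp.mapDomain_single, Finsupp.mapDomain_single]
  have hΦμ : Stmt15.Phi φ ψ μ = 1 := by
    rw [hμmon, Stmt15.Phi_monomial]
    simp only [Stmt15.exl_add, Stmt15.exl_mapDomain_inl, Stmt15.exl_mapDomain_inr,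
      Stmt15.exr_add, Stmt15.exr_mapDomain_inl, Stmt15.exr_mapDomain_inr, add_zero, zero_add]
    rw [← X_pow_eq_monomial, ← X_pow_eq_monomial, hφ1, hψ1, one_mul, one_mul]
  have hXjm : (X (Sum.inl j) : MvPolynomial (Fin a ⊕ Fin b) k) ∈ m' := by
    rw [hm']
    simpa [mxI] using Ideal.mem_map_of_mem
      (rename (Sum.inl : Fin a → Fin a ⊕ Fin b) :
        MvPolynomial (Fin a) k →ₐ[k] MvPolynomial (Fin a ⊕ Fin b) k)
      (Ideal.subset_span ⟨j, rfl⟩ : (X j : MvPolynomial (Fin a) k) ∈ mxI k (Fin a))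
  have hXln : (X (Sum.inr l) : MvPolynomial (Fin a ⊕ Fin b) k) ∈ n' := by
    rw [hn']
    simpa [mxI] using Ideal.mem_map_of_mem
      (rename (Sum.inr : Fin b → Fin a ⊕ Fin b) :
        MvPolynomial (Fin b) k →ₐ[k] MvPolynomial (Fin a ⊕ Fin b) k)
      (Ideal.subset_span ⟨l, rfl⟩ : (X l : MvPolynomial (Fin b) k) ∈ mxI k (Fin b))
  have hμmn : μ ∈ m' ^ s * n' ^ s :=
    Ideal.mul_mem_mul (Ideal.pow_mem_pow hXjm s) (Ideal.pow_mem_pow hXln s)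
  have hXjK : (X (Sum.inl j) : MvPolynomial (Fin a ⊕ Fin b) k) ^ s ∈ K' 0 := by
    rw [hK' 0]
    have hXj : (X j : MvPolynomial (Fin a) k) ^ s ∈ K 0 := by
      have hmem : (X j : MvPolynomial (Fin a) k) ∈ K 0 := hK0 (Ideal.subset_span ⟨j, rfl⟩)
      have hps : (X j : MvPolynomial (Fin a) k) ^ s = X j ^ (s - 1) * X j := by
        rw [← pow_succ]
        congr 1
        omega
      rw [hps]
      exact Ideal.mul_mem_left _ _ hmem
    simpa using Ideal.mem_map_of_mem
      (rename (Sum.inl : Fin a → Fin a ⊕ Fin b) :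
        MvPolynomial (Fin a) k →ₐ[k] MvPolynomial (Fin a ⊕ Fin b) k) hXj
  have hXlL : (X (Sum.inr l) : MvPolynomial (Fin a ⊕ Fin b) k) ^ s ∈ L' 0 := by
    rw [hL' 0]
    have hXl : (X l : MvPolynomial (Fin b) k) ^ s ∈ L 0 := by
      have hmem : (X l : MvPolynomial (Fin b) k) ∈ L 0 := hL0 (Ideal.subset_span ⟨l, rfl⟩)
      have hps : (X l : MvPolynomial (Fin b) k) ^ s = X l ^ (s - 1) * X l := by
        rw [← pow_succ]
        congr 1
        omega
      rw [hps]
      exact Ideal.mul_mem_left _ _ hmem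
    simpa using Ideal.mem_map_of_mem
      (rename (Sum.inr : Fin b → Fin a ⊕ Fin b) :
        MvPolynomial (Fin b) k →ₐ[k] MvPolynomial (Fin a ⊕ Fin b) k) hXl
  have hμW : μ ∈ W := by
    rw [hW]
    refine Submodule.mem_inf.2 ⟨?_, ?_⟩
    · have hle : K' 0 * n' ^ (s - 0) ≤ ⨆ i ∈ Finset.range (s + 1), K' i * n' ^ (s - i) :=
        le_iSup₂ (f := fun i (_ : i ∈ Finset.range (s + 1)) => K' i * n' ^ (s - i)) 0 (by simp)
      apply hle
      rw [Nat.sub_zero]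
      exact Ideal.mul_mem_mul hXjK (Ideal.pow_mem_pow hXln s)
    · have hle : L' 0 * m' ^ (s - 0) ≤ ⨆ t ∈ Finset.range (s + 1), L' t * m' ^ (s - t) :=
        le_iSup₂ (f := fun t (_ : t ∈ Finset.range (s + 1)) => L' t * m' ^ (s - t)) 0 (by simp)
      apply hle
      rw [Nat.sub_zero, show μ = X (Sum.inr l) ^ s * X (Sum.inl j) ^ s from mul_comm _ _]
      exact Ideal.mul_mem_mul hXlL (Ideal.pow_mem_pow hXjm s)
  constructor
  · intro hle
    have h := hker μ (hle hμmn)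
    rw [hΦμ] at h
    exact one_ne_zero h
  · refine ⟨μ, hμW, ?_, fun hmem => ?_⟩
    · have h := ((isHomogeneous_X k (Sum.inl j)).pow s).mul ((isHomogeneous_X k (Sum.inr l)).pow s)
      have h2s : 1 * s + 1 * s = 2 * s := by ring
      rw [h2s] at h
      exact h
    · have h := hker μ hmem
      rw [hΦμ] at h
      exact one_ne_zero h

end
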